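/- Let G be an l×l matrix over F_q with rows G_1,…,G_l and G' an l'×l' matrix over F_q with rows G'_1,…,G'_{l'}, both non-singular, with partial distances D_i(G) = d(G_i, span(G_{i+1},…,G_l)) and similarly D_{i'}(G'). Then the partial distances of the Kronecker product G' ⊗ G satisfy D_k(G' ⊗ G) = D_{i'}(G') · D_i(G), where k = (i'−1)l + i. -/

import Mathlib

/-- The `i`-th partial distance of a matrix `G` with linearly ordered row index:
`D_i(G) = min { d_H(G_i, v) : v ∈ span of the rows strictly after row i }`. -/
noncomputable def partialDist {F : Type*} [Field F] [DecidableEq F]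
    {ι κ : Type*} [Fintype κ] [LinearOrder ι] (G : Matrix ι κ F) (i : ι) : ℕ :=
  sInf {d : ℕ | ∃ v ∈ Submodule.span F {w : κ → F | ∃ j, i < j ∧ w = G j},
    d = hammingDist (G i) v}

instance {α β : Type*} [Fintype α] [Fintype β] : Fintype (α ×ₗ β) :=
  inferInstanceAs (Fintype (α × β))

section KroneckerAux

open Finset

variable {F : Type*} [Field F] [DecidableEq F] {l l' : ℕ}

/-- Kronecker of two vectors. -/
def kronV (a : Fin l' → F) (b : Fin l → F) : Fin l' × Fin l → F := fun c => a c.1 * b c.2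

/-- `kronV a ·` as a linear map. -/
def kronL (a : Fin l' → F) : (Fin l → F) →ₗ[F] (Fin l' × Fin l → F) where
  toFun b := kronV a b
  map_add' x y := by funext c; simp [kronV, mul_add]
  map_smul' k x := by funext c; simp [kronV]; ring

/-- `kronV · b` as a linear map. -/
def kronR (b : Fin l → F) : (Fin l' → F) →ₗ[F] (Fin l' × Fin l → F) where
  toFun a := kronV a b
  map_add' x y := by funext c; simp [kronV, add_mul]
  map_smul' k x := by funext c; simp [kronV]; ring

/-- Column extraction as a linear map. -/
def colL (r : Fin l) : (Fin l' × Fin l → F) →ₗ[F] (Fin l' → F) where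
  toFun w := fun r' => w (r', r)
  map_add' x y := rfl
  map_smul' k x := rfl

lemma hammingNorm_kronV (a : Fin l' → F) (b : Fin l → F) :
    hammingNorm (kronV a b) = hammingNorm a * hammingNorm b := by
  classical
  unfold hammingNorm kronV
  rw [← Finset.card_product]
  congr 1
  ext ⟨r', r⟩
  simp [mul_ne_zero_iff]

lemma hammingNorm_sum_cols (x : Fin l' × Fin l → F) :
    hammingNorm x = ∑ r : Fin l, hammingNorm (fun r' => x (r', r)) := by
  classical
  unfold hammingNorm
  simp only [Finset.card_filter]
  rw [Fintype.sum_prod_type_right]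

lemma hammingDist_eq_hammingNorm_sub {κ : Type*} [Fintype κ] (x y : κ → F) :
    hammingDist x y = hammingNorm (x - y) := by
  rw [hammingDist_comm, hammingDist_eq_hammingNorm, neg_add_eq_sub]

lemma partialDist_le {ι κ : Type*} [Fintype κ] [LinearOrder ι] (G : Matrix ι κ F) (i : ι)
    {v : κ → F} (hv : v ∈ Submodule.span F {w : κ → F | ∃ j, i < j ∧ w = G j}) :
    partialDist G i ≤ hammingDist (G i) v :=
  Nat.sInf_le ⟨v, hv, rfl⟩

lemma exists_partialDist {ι κ : Type*} [Fintype κ] [LinearOrder ι] (G : Matrix ι κ F) (i : ι) :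
    ∃ v ∈ Submodule.span F {w : κ → F | ∃ j, i < j ∧ w = G j},
      hammingDist (G i) v = partialDist G i := by
  have hne : {d : ℕ | ∃ v ∈ Submodule.span F {w : κ → F | ∃ j, i < j ∧ w = G j},
      d = hammingDist (G i) v}.Nonempty :=
    ⟨hammingDist (G i) 0, 0, Submodule.zero_mem _, rfl⟩
  obtain ⟨v, hv, hd⟩ := Nat.sInf_mem hne
  exact ⟨v, hv, hd.symm⟩

end KroneckerAux

/-- Partial distances are multiplicative under the Kronecker product:
`D_{(i',i)}(G' ⊗ G) = D_{i'}(G') · D_i(G)`, rows of `G' ⊗ G` being ordered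
lexicographically. -/
theorem partialDist_kronecker
    {F : Type*} [Field F] [DecidableEq F] {l l' : ℕ}
    (G : Matrix (Fin l) (Fin l) F) (G' : Matrix (Fin l') (Fin l') F)
    (hG : IsUnit G.det) (hG' : IsUnit G'.det) (i : Fin l) (i' : Fin l') :
    partialDist
      (Matrix.of fun (p : Fin l' ×ₗ Fin l) (c : Fin l' × Fin l) =>
        G' (ofLex p).1 c.1 * G (ofLex p).2 c.2)
      (toLex (i', i))
      = partialDist G' i' * partialDist G i := by
  classical
  set K : Matrix (Fin l' ×ₗ Fin l) (Fin l' × Fin l) F :=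
    Matrix.of fun (p : Fin l' ×ₗ Fin l) (c : Fin l' × Fin l) =>
      G' (ofLex p).1 c.1 * G (ofLex p).2 c.2 with hKdef
  set SG : Submodule F (Fin l → F) :=
    Submodule.span F {w | ∃ j, i < j ∧ w = G j} with hSGdef
  set SG' : Submodule F (Fin l' → F) :=
    Submodule.span F {w | ∃ j, i' < j ∧ w = G' j} with hSG'def
  set SK : Submodule F (Fin l' × Fin l → F) :=
    Submodule.span F {w | ∃ p, toLex (i', i) < p ∧ w = K p} with hSKdef
  set SAll : Submodule F (Fin l → F) := Submodule.span F (Set.range G) with hSAlldef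
  have hSGAll : SG ≤ SAll := by
    rw [hSGdef, hSAlldef]
    apply Submodule.span_mono
    rintro w ⟨j, _, rfl⟩; exact ⟨j, rfl⟩
  -- membership claims
  have hA : ∀ u ∈ SG, (kronL (G' i') u : Fin l' × Fin l → F) ∈ SK := by
    intro u hu
    have : SG ≤ Submodule.comap (kronL (G' i')) SK := by
      rw [hSGdef, Submodule.span_le]
      rintro w ⟨j, hj, rfl⟩
      exact Submodule.subset_span
        ⟨toLex (i', j), Prod.Lex.lt_iff.2 (Or.inr ⟨rfl, hj⟩), rfl⟩
    exact this hu
  have hAll : ∀ j' : Fin l', i' < j' → ∀ u ∈ SAll,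
      (kronV (G' j') u : Fin l' × Fin l → F) ∈ SK := by
    intro j' hj' u hu
    have : SAll ≤ Submodule.comap (kronL (G' j')) SK := by
      rw [hSAlldef, Submodule.span_le]
      rintro w ⟨j, rfl⟩
      exact Submodule.subset_span
        ⟨toLex (j', j), Prod.Lex.lt_iff.2 (Or.inl hj'), rfl⟩
    exact this hu
  have hB : ∀ a ∈ SG', ∀ u ∈ SAll, (kronV a u : Fin l' × Fin l → F) ∈ SK := by
    intro a ha u hu
    have : SG' ≤ Submodule.comap (kronR u) SK := by
      rw [hSG'def, Submodule.span_le]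
      rintro w ⟨j', hj', rfl⟩
      exact hAll j' hj' u hu
    exact this ha
  have hGiAll : G i ∈ SAll := Submodule.subset_span ⟨i, rfl⟩
  -- upper bound
  obtain ⟨v, hv, hvd⟩ := exists_partialDist G i
  obtain ⟨v', hv', hvd'⟩ := exists_partialDist G' i'
  have upper : partialDist K (toLex (i', i)) ≤ partialDist G' i' * partialDist G i := by
    set w : Fin l' × Fin l → F := kronL (G' i') v + kronV v' (G i - v) with hwdef
    have hw : w ∈ SK :=
      Submodule.add_mem _ (hA v hv) (hB v' hv' (G i - v) (sub_mem hGiAll (hSGAll hv)))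
    have hdup : hammingDist (K (toLex (i', i))) w = partialDist G' i' * partialDist G i := by
      rw [hammingDist_eq_hammingNorm_sub]
      have hsub : K (toLex (i', i)) - w = kronV (G' i' - v') (G i - v) := by
        funext c
        simp only [hwdef, hKdef, Pi.sub_apply, Pi.add_apply, Matrix.of_apply, kronL,
          kronV, LinearMap.coe_mk, AddHom.coe_mk, ofLex_toLex]
        ring
      rw [hsub, hammingNorm_kronV, ← hammingDist_eq_hammingNorm_sub,
        ← hammingDist_eq_hammingNorm_sub, hvd, hvd']
    exact Nat.sInf_le ⟨w, hw, hdup.symm⟩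
  -- lower bound
  have lower : partialDist G' i' * partialDist G i ≤ partialDist K (toLex (i', i)) := by
    unfold partialDist
    refine le_csInf ⟨hammingDist (K (toLex (i', i))) 0, 0, Submodule.zero_mem _, rfl⟩ ?_
    rintro d ⟨w, hw, rfl⟩
    set A : Submodule F (Fin l' × Fin l → F) := Submodule.map (kronL (G' i')) SG with hAdef
    set B : Submodule F (Fin l' × Fin l → F) :=
      Submodule.span F {w | ∃ (j' : Fin l') (u : Fin l → F), i' < j' ∧ w = kronV (G' j') u}
      with hBdef
    have hAB : SK ≤ A ⊔ B := by
      rw [hSKdef, Submodule.span_le]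
      rintro x ⟨p, hp, rfl⟩
      have hp' : toLex (i', i) < toLex (ofLex p) := hp
      rcases Prod.Lex.lt_iff.1 hp' with h1 | ⟨h1, h2⟩
      · refine Submodule.mem_sup_right (Submodule.subset_span ?_)
        exact ⟨(ofLex p).1, G (ofLex p).2, h1, rfl⟩
      · refine Submodule.mem_sup_left ?_
        rw [hAdef]
        refine ⟨G (ofLex p).2, Submodule.subset_span ⟨(ofLex p).2, h2, rfl⟩, ?_⟩
        funext c
        rw [show i' = (ofLex p).1 from h1]
        rfl
    obtain ⟨a, ha, b, hb, hab⟩ := Submodule.mem_sup.1 (hAB hw)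
    rw [hAdef] at ha
    obtain ⟨v, hv, rfl⟩ := ha
    have hcol : ∀ r : Fin l, (fun r' => b (r', r)) ∈ SG' := by
      intro r
      have : B ≤ Submodule.comap (colL r) SG' := by
        rw [hBdef, Submodule.span_le]
        rintro x ⟨j', u, hj', rfl⟩
        have hx : (colL r (kronV (G' j') u) : Fin l' → F) = u r • G' j' := by
          funext r'
          simp only [colL, kronV, LinearMap.coe_mk, AddHom.coe_mk, Pi.smul_apply,
            smul_eq_mul]
          ring
        show (colL r) (kronV (G' j') u) ∈ SG'
        rw [hx]
        exact Submodule.smul_mem _ _ (Submodule.subset_span ⟨j', hj', rfl⟩)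
      exact this hb
    have hc : ∀ (r' : Fin l') (r : Fin l),
        (K (toLex (i', i)) - w) (r', r) = (G i r - v r) * G' i' r' - b (r', r) := by
      intro r' r
      rw [← hab]
      simp only [hKdef, Pi.sub_apply, Pi.add_apply, Matrix.of_apply, kronL, kronV,
        LinearMap.coe_mk, AddHom.coe_mk, ofLex_toLex]
      ring
    have key : ∀ r : Fin l, G i r - v r ≠ 0 →
        partialDist G' i' ≤ hammingNorm (fun r' => (K (toLex (i', i)) - w) (r', r)) := by
      intro r hr
      have heq : (fun r' => (K (toLex (i', i)) - w) (r', r)) =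
          (G i r - v r) • (G' i' - (G i r - v r)⁻¹ • fun r' => b (r', r)) := by
        funext r'
        simp only [hc, Pi.smul_apply, Pi.sub_apply, smul_eq_mul]
        field_simp
      rw [heq, hammingNorm_smul (fun _ => (isRegular_of_ne_zero hr).left.isSMulRegular),
        ← hammingDist_eq_hammingNorm_sub]
      exact partialDist_le G' i'
        (Submodule.smul_mem _ _ (hcol r))
    rw [hammingDist_eq_hammingNorm_sub, hammingNorm_sum_cols]
    calc partialDist G' i' * partialDist G i
        ≤ partialDist G' i' * hammingDist (G i) v :=
          Nat.mul_le_mul_left _ (partialDist_le G i hv)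
      _ = partialDist G' i' * hammingNorm (G i - v) := by
          rw [hammingDist_eq_hammingNorm_sub]
      _ ≤ ∑ r : Fin l, hammingNorm (fun r' => (K (toLex (i', i)) - w) (r', r)) := by
          have hsub : (Finset.univ.filter fun r => (G i - v) r ≠ 0) ⊆ Finset.univ :=
            Finset.subset_univ _
          calc partialDist G' i' * hammingNorm (G i - v)
              = ∑ _r ∈ Finset.univ.filter (fun r => (G i - v) r ≠ 0), partialDist G' i' := by
                rw [Finset.sum_const, hammingNorm, smul_eq_mul, mul_comm]
            _ ≤ ∑ r ∈ Finset.univ.filter (fun r => (G i - v) r ≠ 0),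
                  hammingNorm (fun r' => (K (toLex (i', i)) - w) (r', r)) := by
                apply Finset.sum_le_sum
                intro r hr
                exact key r (by simpa using (Finset.mem_filter.1 hr).2)
            _ ≤ ∑ r : Fin l, hammingNorm (fun r' => (K (toLex (i', i)) - w) (r', r)) :=
                Finset.sum_le_sum_of_subset hsub
  exact le_antisymm upper lower
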